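/- Let A = ℂ[ψ_j^{(n)}] with derivation D as above, and for finitely supported u ∈ A^J let ∂_u = Σ_{j,n} Dⁿ(u_j) ∂/∂ψ_j^{(n)}. Then the bracket [u, v] := ∂_u(v) − ∂_v(u) (applied componentwise) satisfies ∂_{[u,v]} = [∂_u, ∂_v] as derivations of A; in particular this bracket satisfies the Jacobi identity and makes A^J into a Lie algebra. -/

import Mathlib

namespace EvolutionaryDerivations

open MvPolynomial

/-- The polynomial algebra `A = ℂ[ψ_j^{(n)}]` in commuting formal variables. -/
abbrev FormalAlg (J : Type) := MvPolynomial (J × ℕ) ℂ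

/-- The derivation `D` with `D(ψ_j^{(n)}) = ψ_j^{(n+1)}`. -/
noncomputable def Dop (J : Type) : Derivation ℂ (FormalAlg J) (FormalAlg J) :=
  mkDerivation ℂ (fun p => X (p.1, p.2 + 1))

/-- The evolutionary derivation `∂_u = Σ_{j,n} Dⁿ(u_j) ∂/∂ψ_j^{(n)}` attached to
a finitely supported family `u = (u_j)`. -/
noncomputable def evol (J : Type) (u : J → FormalAlg J) (f : FormalAlg J) : FormalAlg J :=
  ∑ᶠ (j : J) (n : ℕ), (⇑(Dop J))^[n] (u j) * pderiv (j, n) f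

/-- The bracket `[u,v] = ∂_u(v) − ∂_v(u)` (componentwise). -/
noncomputable def br (J : Type) (u v : J → FormalAlg J) : J → FormalAlg J :=
  fun j => evol J u (v j) - evol J v (u j)

open Function in
/-- The derivation version of `evol`. -/
noncomputable def Ew (J : Type) (u : J → FormalAlg J) :
    Derivation ℂ (FormalAlg J) (FormalAlg J) :=
  mkDerivation ℂ (fun p : J × ℕ => (⇑(Dop J))^[p.2] (u p.1))

variable {J : Type}

lemma iter_zero (n : ℕ) : (⇑(Dop J))^[n] (0 : FormalAlg J) = 0 :=
  Function.iterate_fixed (map_zero _) n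

lemma supfin_inner (u : J → FormalAlg J) (f : FormalAlg J) (j : J) (g : FormalAlg J) :
    (Function.support fun n => g * ((⇑(Dop J))^[n] (u j) * pderiv (j, n) f)).Finite := by
  have hinj : Function.Injective (fun n : ℕ => ((j, n) : J × ℕ)) :=
    fun a b h => (Prod.ext_iff.mp h).2
  apply Set.Finite.subset (Set.Finite.preimage hinj.injOn f.vars.finite_toSet)
  intro n hn
  simp only [Function.mem_support] at hn
  by_contra hmem
  exact hn (by rw [pderiv_eq_zero_of_notMem_vars (by simpa using hmem), mul_zero, mul_zero])

lemma supfin_inner' (u : J → FormalAlg J) (f : FormalAlg J) (j : J) :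
    (Function.support fun n => (⇑(Dop J))^[n] (u j) * pderiv (j, n) f).Finite := by
  have := supfin_inner u f j 1
  simpa using this

lemma supfin_outer (u : J → FormalAlg J) (hu : (Function.support u).Finite) (f : FormalAlg J) :
    (Function.support fun j => ∑ᶠ n, (⇑(Dop J))^[n] (u j) * pderiv (j, n) f).Finite := by
  apply hu.subset
  intro j hj
  simp only [Function.mem_support] at hj ⊢
  intro h0
  apply hj
  have : (fun n => (⇑(Dop J))^[n] (u j) * pderiv (j, n) f) = fun _ => 0 := by
    funext n; rw [h0, iter_zero, zero_mul]
  rw [this, finsum_zero]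

lemma evol_C (u : J → FormalAlg J) (a : ℂ) : evol J u (C a) = 0 := by
  simp [evol, pderiv_C]

lemma evol_add (u : J → FormalAlg J) (hu : (Function.support u).Finite) (f g : FormalAlg J) :
    evol J u (f + g) = evol J u f + evol J u g := by
  unfold evol
  rw [← finsum_add_distrib (supfin_outer u hu f) (supfin_outer u hu g)]
  apply finsum_congr; intro j
  rw [← finsum_add_distrib (supfin_inner' u f j) (supfin_inner' u g j)]
  apply finsum_congr; intro n
  rw [map_add, mul_add]

lemma evol_X (u : J → FormalAlg J) (hu : (Function.support u).Finite) (p : J × ℕ) :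
    evol J u (X p) = (⇑(Dop J))^[p.2] (u p.1) := by
  classical
  unfold evol
  rw [finsum_eq_single _ p.1, finsum_eq_single _ p.2]
  · rw [pderiv_X, Pi.single_eq_same, mul_one]
  · intro n hn
    rw [show ((p.1 : J), n) = (p.1, n) from rfl, pderiv_X_of_ne, mul_zero]
    exact fun h => hn (by simpa using congrArg Prod.snd h.symm)
  · intro j hj
    have : ∀ n : ℕ, (⇑(Dop J))^[n] (u j) * pderiv (j, n) (X p : FormalAlg J) = 0 := by
      intro n
      rw [pderiv_X_of_ne (fun h => hj (by simpa using congrArg Prod.fst h.symm)), mul_zero]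
    simp only [this, finsum_zero]

lemma evol_mul (u : J → FormalAlg J) (hu : (Function.support u).Finite) (f g : FormalAlg J) :
    evol J u (f * g) = evol J u f * g + f * evol J u g := by
  unfold evol
  have hinner : ∀ j, (Function.support fun n =>
      ((⇑(Dop J))^[n] (u j) * pderiv (j, n) f) * g).Finite := by
    intro j
    apply (supfin_inner' u f j).subset
    intro n hn
    simp only [Function.mem_support] at hn ⊢
    exact fun h => hn (by rw [h, zero_mul])
  have hinner2 : ∀ j, (Function.support fun n =>
      f * ((⇑(Dop J))^[n] (u j) * pderiv (j, n) g)).Finite := fun j => supfin_inner u g j f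
  have houter : (Function.support fun j =>
      ∑ᶠ n, ((⇑(Dop J))^[n] (u j) * pderiv (j, n) f) * g).Finite := by
    apply hu.subset
    intro j hj
    simp only [Function.mem_support] at hj ⊢
    intro h0; apply hj
    have : (fun n => ((⇑(Dop J))^[n] (u j) * pderiv (j, n) f) * g) = fun _ => 0 := by
      funext n; rw [h0, iter_zero, zero_mul, zero_mul]
    rw [this, finsum_zero]
  have houter2 : (Function.support fun j =>
      ∑ᶠ n, f * ((⇑(Dop J))^[n] (u j) * pderiv (j, n) g)).Finite := by
    apply hu.subset
    intro j hj
    simp only [Function.mem_support] at hj ⊢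
    intro h0; apply hj
    have : (fun n => f * ((⇑(Dop J))^[n] (u j) * pderiv (j, n) g)) = fun _ => 0 := by
      funext n; rw [h0, iter_zero, zero_mul, mul_zero]
    rw [this, finsum_zero]
  calc ∑ᶠ (j : J) (n : ℕ), (⇑(Dop J))^[n] (u j) * pderiv (j, n) (f * g)
      = ∑ᶠ (j : J), ((∑ᶠ n, ((⇑(Dop J))^[n] (u j) * pderiv (j, n) f) * g)
          + ∑ᶠ n, f * ((⇑(Dop J))^[n] (u j) * pderiv (j, n) g)) := by
        apply finsum_congr; intro j
        rw [← finsum_add_distrib (hinner j) (hinner2 j)]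
        apply finsum_congr; intro n
        rw [pderiv_mul]; ring
    _ = (∑ᶠ (j : J), ∑ᶠ n, ((⇑(Dop J))^[n] (u j) * pderiv (j, n) f) * g)
          + ∑ᶠ (j : J), ∑ᶠ n, f * ((⇑(Dop J))^[n] (u j) * pderiv (j, n) g) :=
        finsum_add_distrib houter houter2
    _ = (∑ᶠ (j : J) (n : ℕ), (⇑(Dop J))^[n] (u j) * pderiv (j, n) f) * g
          + f * ∑ᶠ (j : J) (n : ℕ), (⇑(Dop J))^[n] (u j) * pderiv (j, n) g := by
        congr 1
        · rw [finsum_mul _ g]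
          apply finsum_congr; intro j
          rw [finsum_mul _ g]
        · rw [mul_finsum _ f]
          apply finsum_congr; intro j
          rw [mul_finsum _ f]

/-- `evol` agrees with the derivation `Ew`. -/
lemma evol_eq (u : J → FormalAlg J) (hu : (Function.support u).Finite) (f : FormalAlg J) :
    evol J u f = Ew J u f := by
  induction f using MvPolynomial.induction_on with
  | C a => rw [evol_C, Ew, derivation_C]
  | add f g hf hg => rw [evol_add u hu, map_add, hf, hg]
  | mul_X f p hf =>
      rw [evol_mul u hu, Derivation.leibniz, smul_eq_mul, smul_eq_mul, hf,
        evol_X u hu, Ew, mkDerivation_X]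
      ring

lemma Ew_X (u : J → FormalAlg J) (q : J × ℕ) :
    Ew J u (X q : FormalAlg J) = (⇑(Dop J))^[q.2] (u q.1) := mkDerivation_X _ _ _

lemma Dop_X (q : J × ℕ) : Dop J (X q : FormalAlg J) = X (q.1, q.2 + 1) := mkDerivation_X _ _ _

lemma Ew_comm_Dop (u : J → FormalAlg J) (f : FormalAlg J) :
    Ew J u (Dop J f) = Dop J (Ew J u f) := by
  have h : ⁅Ew J u, Dop J⁆ = (0 : Derivation ℂ (FormalAlg J) (FormalAlg J)) := by
    apply derivation_ext
    intro p
    rw [Derivation.commutator_apply, Derivation.zero_apply, Dop_X, Ew_X, Ew_X]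
    show (⇑(Dop J))^[p.2 + 1] (u p.1) - Dop J ((⇑(Dop J))^[p.2] (u p.1)) = 0
    rw [Function.iterate_succ_apply', sub_self]
  have h2 : Ew J u (Dop J f) - Dop J (Ew J u f) = 0 := by
    rw [← Derivation.commutator_apply, h, Derivation.zero_apply]
  exact sub_eq_zero.mp h2

lemma iter_sub (n : ℕ) (a b : FormalAlg J) :
    (⇑(Dop J))^[n] (a - b) = (⇑(Dop J))^[n] a - (⇑(Dop J))^[n] b := by
  induction n with
  | zero => rfl
  | succ n ih => rw [Function.iterate_succ_apply', Function.iterate_succ_apply',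
      Function.iterate_succ_apply', ih, map_sub]

lemma evol_sub (u : J → FormalAlg J) (hu : (Function.support u).Finite) (f g : FormalAlg J) :
    evol J u (f - g) = evol J u f - evol J u g := by
  rw [evol_eq u hu, evol_eq u hu, evol_eq u hu, map_sub]

lemma Ew_comm_iter (u : J → FormalAlg J) (n : ℕ) (f : FormalAlg J) :
    Ew J u ((⇑(Dop J))^[n] f) = (⇑(Dop J))^[n] (Ew J u f) := by
  induction n with
  | zero => rfl
  | succ n ih => rw [Function.iterate_succ_apply', Function.iterate_succ_apply',
      Ew_comm_Dop, ih]

lemma br_support (u v : J → FormalAlg J) (hu : (Function.support u).Finite)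
    (hv : (Function.support v).Finite) : (Function.support (br J u v)).Finite := by
  apply (hu.union hv).subset
  intro j hj
  simp only [Function.mem_support, Set.mem_union] at hj ⊢
  by_contra h
  push_neg at h
  obtain ⟨h1, h2⟩ := h
  apply hj
  rw [br, h1, h2, evol_eq u hu, evol_eq v hv, map_zero, map_zero, sub_zero]

lemma Ew_br (u v : J → FormalAlg J) (hu : (Function.support u).Finite)
    (hv : (Function.support v).Finite) :
    Ew J (br J u v) = ⁅Ew J u, Ew J v⁆ := by
  apply derivation_ext
  intro p
  rw [Derivation.commutator_apply, Ew, mkDerivation_X]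
  show (⇑(Dop J))^[p.2] (br J u v p.1) = _
  rw [br, evol_eq u hu, evol_eq v hv, Ew_X, Ew_X, Ew_comm_iter, Ew_comm_iter, iter_sub]

/-- The bracket `[u,v] := ∂_u(v) − ∂_v(u)` satisfies `∂_{[u,v]} = [∂_u, ∂_v]`;
in particular it satisfies the Jacobi identity and makes the space of finitely
supported families into a Lie algebra. -/
theorem evolutionary_bracket (J : Type) :
    (∀ u v : J → FormalAlg J,
      (Function.support u).Finite → (Function.support v).Finite →
      ∀ f : FormalAlg J,
        evol J (br J u v) f = evol J u (evol J v f) - evol J v (evol J u f)) ∧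
    (∀ u v : J → FormalAlg J,
      (Function.support u).Finite → (Function.support v).Finite →
      br J u v = -br J v u) ∧
    (∀ u v w : J → FormalAlg J,
      (Function.support u).Finite → (Function.support v).Finite →
      (Function.support w).Finite →
      br J (br J u v) w + br J (br J v w) u + br J (br J w u) v = 0) := by
  have main : ∀ u v : J → FormalAlg J,
      (Function.support u).Finite → (Function.support v).Finite →
      ∀ f : FormalAlg J,
        evol J (br J u v) f = evol J u (evol J v f) - evol J v (evol J u f) := by
    intro u v hu hv f
    rw [evol_eq _ (br_support u v hu hv), evol_eq u hu, evol_eq v hv, evol_eq u hu,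
      evol_eq v hv, Ew_br u v hu hv, Derivation.commutator_apply]
  refine ⟨main, ?_, ?_⟩
  · intro u v _ _
    funext j
    simp only [br, Pi.neg_apply]
    ring
  · intro u v w hu hv hw
    funext j
    simp only [Pi.add_apply, Pi.zero_apply, br]
    rw [main u v hu hv, main v w hv hw, main w u hw hu,
      evol_sub w hw, evol_sub u hu, evol_sub v hv]
    abel


end EvolutionaryDerivations
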